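/- Let N ∈ ℕ, let K be the (N+1)×(N+1) matrix with K_{i,j} = K_j(i) for i, j ∈ {0,…,N}, and let M be the diagonal matrix with M_{j,j} = C(N,j). Then K is invertible with K^{−1} = 2^{−N} M K M; equivalently, Σ_{i=0}^{N} C(N,i) K_n(i) K_m(i) = δ_{n,m} · 2^{N} · C(N,n)^{−1} for all n, m ∈ {0,…,N}. -/

import Mathlib

open Matrix Set Polynomial

/-- Krawtchouk polynomial `K_n(x)` with parameter `p = 1/2` and `N` trials. -/
noncomputable def kraw (N n : ℕ) (x : ℂ) : ℂ :=
  ∑ s ∈ Finset.range (n + 1),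
    ((ascPochhammer ℂ s).eval (-(n : ℂ)) * (ascPochhammer ℂ s).eval (-x)
        / ((ascPochhammer ℂ s).eval (-(N : ℂ)) * (Nat.factorial s : ℂ))) * 2 ^ s

/-- The Krawtchouk matrix `K_{i,j} = K_j(i)`. -/
noncomputable def Kmat (N : ℕ) : Matrix (Fin (N + 1)) (Fin (N + 1)) ℂ :=
  Matrix.of fun i j => kraw N (j : ℕ) (((i : ℕ) : ℂ))

/-- The diagonal binomial matrix `M_{j,j} = C(N,j)`. -/
noncomputable def Mmat (N : ℕ) : Matrix (Fin (N + 1)) (Fin (N + 1)) ℂ :=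
  Matrix.diagonal fun j => (N.choose (j : ℕ) : ℂ)

/- ### Auxiliary machinery -/


/-- extend a sum whose tail terms vanish -/
lemma kraw_sum_extend {a b : ℕ} (h : a ≤ b) (f : ℕ → ℂ)
    (hf : ∀ s, a < s → f s = 0) :
    ∑ s ∈ Finset.range (a+1), f s = ∑ s ∈ Finset.range (b+1), f s :=
  Finset.sum_subset (Finset.range_subset_range.mpr (by omega))
    (fun s _ hs => hf s (by simp only [Finset.mem_range] at hs; omega))

lemma kraw_eq_sum (N n : ℕ) (hn : n ≤ N) (i : ℕ) :
    kraw N n (i : ℂ) = ∑ s ∈ Finset.range (n+1),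
      (-2 : ℂ)^s * (n.choose s) * (i.choose s) / (N.choose s) := by
  unfold kraw
  refine Finset.sum_congr rfl fun s hs => ?_
  have hsn : s ≤ n := Nat.lt_succ_iff.mp (Finset.mem_range.mp hs)
  rw [ascPochhammer_eval_neg_eq_descPochhammer, ascPochhammer_eval_neg_eq_descPochhammer,
      ascPochhammer_eval_neg_eq_descPochhammer,
      descPochhammer_eval_eq_descFactorial, descPochhammer_eval_eq_descFactorial,
      descPochhammer_eval_eq_descFactorial,
      Nat.descFactorial_eq_factorial_mul_choose, Nat.descFactorial_eq_factorial_mul_choose,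
      Nat.descFactorial_eq_factorial_mul_choose]
  have h1 : ((-1:ℂ))^s ≠ 0 := pow_ne_zero _ (by norm_num)
  have h2 : (s.factorial : ℂ) ≠ 0 := Nat.cast_ne_zero.mpr s.factorial_ne_zero
  have h3 : (N.choose s : ℂ) ≠ 0 := Nat.cast_ne_zero.mpr (Nat.choose_pos (hsn.trans hn)).ne'
  rw [show ((-2:ℂ))^s = (-1)^s * 2^s from by rw [neg_pow 2 s]]
  push_cast
  field_simp

lemma kraw_eq_sum' (N n : ℕ) (hn : n ≤ N) (i : ℕ) :
    kraw N n (i : ℂ) = ∑ s ∈ Finset.range (N+1),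
      (-2 : ℂ)^s * (n.choose s) * (i.choose s) / (N.choose s) := by
  rw [kraw_eq_sum N n hn i]
  exact kraw_sum_extend hn _ fun s hs => by
    simp [Nat.choose_eq_zero_of_lt hs]

lemma kraw_symm (N n i : ℕ) (hn : n ≤ N) (hi : i ≤ N) :
    kraw N n (i : ℂ) = kraw N i (n : ℂ) := by
  rw [kraw_eq_sum' N n hn i, kraw_eq_sum' N i hi n]
  exact Finset.sum_congr rfl fun s _ => by ring

/-- the polynomial `(1-X)^i (1+X)^{N-i}` whose coefficients are (scaled) Krawtchouk values -/
noncomputable def qpoly (N i : ℕ) : Polynomial ℂ := (1 - X)^i * (1 + X)^(N - i)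

lemma coeff_qpoly (N i n : ℕ) (hi : i ≤ N) :
    (qpoly N i).coeff n
      = ∑ s ∈ Finset.range (i+1),
          (-2:ℂ)^s * (i.choose s) * (if s ≤ n then ((N-s).choose (n-s) : ℂ) else 0) := by
  unfold qpoly
  have h1 : (1 - X : Polynomial ℂ) = (-2) * X + (1 + X) := by ring
  rw [h1, add_pow, Finset.sum_mul, finset_sum_coeff]
  refine Finset.sum_congr rfl fun s hs => ?_
  have hsi : s ≤ i := Nat.lt_succ_iff.mp (Finset.mem_range.mp hs)
  have hexp : i - s + (N - i) = N - s := by omega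
  have h2 : ((-2) * X : Polynomial ℂ)^s * (1+X)^(i-s) * (i.choose s : Polynomial ℂ) * (1+X)^(N-i)
      = Polynomial.C ((-2:ℂ)^s * (i.choose s)) * ((1+X)^(N-s) * X^s) := by
    rw [mul_pow, ← hexp, pow_add]
    simp only [_root_.map_mul, _root_.map_pow, _root_.map_neg, _root_.map_ofNat, Polynomial.C_eq_natCast]
    ring
  rw [h2, coeff_C_mul, coeff_mul_X_pow', coeff_one_add_X_pow]

lemma kraw_eq_coeff (N n i : ℕ) (hn : n ≤ N) (hi : i ≤ N) :
    kraw N n (i : ℂ) = (qpoly N i).coeff n / (N.choose n : ℂ) := by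
  rw [kraw_eq_sum' N n hn i, coeff_qpoly N i n hi, Finset.sum_div]
  rw [show ∑ s ∈ Finset.range (i+1),
        (-2:ℂ)^s * (i.choose s) * (if s ≤ n then ((N-s).choose (n-s) : ℂ) else 0) / (N.choose n : ℂ)
      = ∑ s ∈ Finset.range (N+1),
        (-2:ℂ)^s * (i.choose s) * (if s ≤ n then ((N-s).choose (n-s) : ℂ) else 0) / (N.choose n : ℂ)
    from kraw_sum_extend hi _ fun s hs => by simp [Nat.choose_eq_zero_of_lt hs]]
  refine Finset.sum_congr rfl fun s hs => ?_
  have hsN : s ≤ N := Nat.lt_succ_iff.mp (Finset.mem_range.mp hs)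
  have hNs : (N.choose s : ℂ) ≠ 0 := Nat.cast_ne_zero.mpr (Nat.choose_pos hsN).ne'
  have hNn : (N.choose n : ℂ) ≠ 0 := Nat.cast_ne_zero.mpr (Nat.choose_pos hn).ne'
  by_cases hsn : s ≤ n
  · rw [if_pos hsn, div_eq_div_iff hNs hNn]
    have key : ((N.choose n : ℂ) * (n.choose s)) = (N.choose s : ℂ) * (((N-s).choose (n-s))) := by
      exact_mod_cast congrArg (Nat.cast : ℕ → ℂ) (Nat.choose_mul (n := N) hsn)
    linear_combination ((-2:ℂ)^s * (i.choose s)) * key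
  · rw [if_neg hsn, Nat.choose_eq_zero_of_lt (by omega : n < s)]
    simp

lemma key_ident (N : ℕ) :
    ∑ i ∈ Finset.range (N+1),
      (Polynomial.map (C : ℂ →+* Polynomial ℂ) (qpoly N i)) * C ((N.choose i : Polynomial ℂ) * qpoly N i)
    = ∑ k ∈ Finset.range (N+1),
      C ((2:Polynomial ℂ)^N * (N.choose k : Polynomial ℂ) * X^k) * X^k := by
  have lhs_eq : ∀ i ∈ Finset.range (N+1),
      (Polynomial.map (C : ℂ →+* Polynomial ℂ) (qpoly N i)) * C ((N.choose i : Polynomial ℂ) * qpoly N i)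
      = ((1 - X) * C (1 - X))^i * ((1 + X) * C (1 + X))^(N - i) * (N.choose i : Polynomial (Polynomial ℂ)) := by
    intro i _
    unfold qpoly
    simp only [Polynomial.map_mul, Polynomial.map_pow, Polynomial.map_sub, Polynomial.map_add,
      Polynomial.map_one, Polynomial.map_X, _root_.map_mul, _root_.map_pow, _root_.map_sub, _root_.map_add, _root_.map_one,
      Polynomial.C_eq_natCast, mul_pow]
    ring
  rw [Finset.sum_congr rfl lhs_eq, ← add_pow]
  have rhs_eq : ∀ k ∈ Finset.range (N+1),
      C ((2:Polynomial ℂ)^N * (N.choose k : Polynomial ℂ) * X^k) * X^k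
      = (2:Polynomial (Polynomial ℂ))^N * ((X * C X)^k * 1^(N-k) * (N.choose k : Polynomial (Polynomial ℂ))) := by
    intro k _
    simp only [_root_.map_mul, _root_.map_pow, _root_.map_ofNat, one_pow, mul_one, Polynomial.C_eq_natCast]
    ring
  rw [Finset.sum_congr rfl rhs_eq, ← Finset.mul_sum, ← add_pow, ← mul_pow]
  congr 1
  simp only [_root_.map_sub, _root_.map_add, _root_.map_one]
  ring

lemma ortho_q (N n m : ℕ) (hn : n ≤ N) (hm : m ≤ N) :
    ∑ i ∈ Finset.range (N+1), (N.choose i : ℂ) * (qpoly N i).coeff n * (qpoly N i).coeff m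
    = if n = m then 2^N * (N.choose n : ℂ) else 0 := by
  have h := congrArg (fun p => ((p.coeff n).coeff m : ℂ)) (key_ident N)
  simp only [finset_sum_coeff] at h
  have hconst : ∀ k : ℕ, (2:Polynomial ℂ)^N * (N.choose k : Polynomial ℂ) * X^k
      = C ((2:ℂ)^N * (N.choose k : ℂ)) * X^k := by
    intro k
    simp only [_root_.map_mul, _root_.map_pow, _root_.map_ofNat, Polynomial.C_eq_natCast]
  have hL : ∀ i ∈ Finset.range (N+1),
      (((Polynomial.map (C : ℂ →+* Polynomial ℂ) (qpoly N i))
          * C ((N.choose i : Polynomial ℂ) * qpoly N i)).coeff n).coeff m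
      = (N.choose i : ℂ) * (qpoly N i).coeff n * (qpoly N i).coeff m := by
    intro i _
    rw [coeff_mul_C, coeff_map, coeff_C_mul, ← Polynomial.C_eq_natCast, coeff_C_mul]
    ring
  have hR : ∀ k ∈ Finset.range (N+1),
      ((C ((2:Polynomial ℂ)^N * (N.choose k : Polynomial ℂ) * X^k)
          * (X:Polynomial (Polynomial ℂ))^k).coeff n).coeff m
      = if n = k then (if m = k then (2:ℂ)^N * (N.choose k : ℂ) else 0) else 0 := by
    intro k _
    rw [coeff_C_mul, coeff_X_pow, hconst]
    by_cases hnk : n = k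
    · rw [if_pos hnk, if_pos hnk, mul_one, coeff_C_mul, coeff_X_pow]
      split <;> simp
    · simp [hnk]
  rw [Finset.sum_congr rfl hL, Finset.sum_congr rfl hR] at h
  rw [h, Finset.sum_ite_eq (Finset.range (N+1)) n]
  simp only [Finset.mem_range, Nat.lt_succ_iff, hn, if_pos]
  by_cases hnm : n = m
  · subst hnm; simp
  · rw [if_neg (fun h => hnm h.symm), if_neg hnm]

lemma ortho_kraw (N : ℕ) : ∀ n m : ℕ, n ≤ N → m ≤ N →
    (∑ i ∈ Finset.range (N + 1),
      (N.choose i : ℂ) * kraw N n (i : ℂ) * kraw N m (i : ℂ))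
    = if n = m then (2 : ℂ) ^ N * ((N.choose n : ℂ))⁻¹ else 0 := by
  intro n m hn hm
  have hNn : (N.choose n : ℂ) ≠ 0 := Nat.cast_ne_zero.mpr (Nat.choose_pos hn).ne'
  have hNm : (N.choose m : ℂ) ≠ 0 := Nat.cast_ne_zero.mpr (Nat.choose_pos hm).ne'
  have step : (∑ i ∈ Finset.range (N + 1),
      (N.choose i : ℂ) * kraw N n (i : ℂ) * kraw N m (i : ℂ))
      = (∑ i ∈ Finset.range (N + 1),
          (N.choose i : ℂ) * (qpoly N i).coeff n * (qpoly N i).coeff m)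
        / ((N.choose n : ℂ) * (N.choose m : ℂ)) := by
    rw [Finset.sum_div]
    refine Finset.sum_congr rfl fun i hi => ?_
    have hiN : i ≤ N := Nat.lt_succ_iff.mp (Finset.mem_range.mp hi)
    rw [kraw_eq_coeff N n i hn hiN, kraw_eq_coeff N m i hm hiN]
    ring
  rw [step, ortho_q N n m hn hm]
  by_cases hnm : n = m
  · subst hnm
    rw [if_pos rfl, if_pos rfl]
    field_simp
  · rw [if_neg hnm, if_neg hnm, zero_div]


/-- `K` is invertible with `K⁻¹ = 2^{−N} M K M`; equivalently the
orthogonality relations `Σ_i C(N,i) K_n(i) K_m(i) = δ_{n,m} 2^N C(N,n)⁻¹` hold. -/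
theorem stmt10 (N : ℕ) :
    Kmat N * (((2 : ℂ) ^ N)⁻¹ • (Mmat N * Kmat N * Mmat N)) = 1
    ∧ (((2 : ℂ) ^ N)⁻¹ • (Mmat N * Kmat N * Mmat N)) * Kmat N = 1
    ∧ ∀ n m : ℕ, n ≤ N → m ≤ N →
        (∑ i ∈ Finset.range (N + 1),
          (N.choose i : ℂ) * kraw N n (i : ℂ) * kraw N m (i : ℂ))
        = if n = m then (2 : ℂ) ^ N * ((N.choose n : ℂ))⁻¹ else 0 := by
  have h2N : ((2:ℂ)^N) ≠ 0 := pow_ne_zero _ (by norm_num)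
  have hmain : Kmat N * (((2 : ℂ) ^ N)⁻¹ • (Mmat N * Kmat N * Mmat N)) = 1 := by
    ext a b
    have hb : (b : ℕ) ≤ N := Nat.lt_succ_iff.mp b.isLt
    have ha : (a : ℕ) ≤ N := Nat.lt_succ_iff.mp a.isLt
    have hNa : (N.choose (a:ℕ) : ℂ) ≠ 0 := Nat.cast_ne_zero.mpr (Nat.choose_pos ha).ne'
    have hMKM : ∀ x y : Fin (N+1), (Mmat N * Kmat N * Mmat N) x y
        = (N.choose (x:ℕ) : ℂ) * kraw N (y:ℕ) ((x:ℕ):ℂ) * (N.choose (y:ℕ) : ℂ) := by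
      intro x y
      simp [Mmat, Kmat, Matrix.mul_diagonal, Matrix.diagonal_mul]
    rw [Matrix.mul_apply]
    simp only [Matrix.smul_apply, hMKM, smul_eq_mul]
    simp only [Kmat, Matrix.of_apply]
    have hterm : ∀ k : Fin (N+1),
        kraw N (k:ℕ) ((a:ℕ):ℂ) * (((2:ℂ)^N)⁻¹ * ((N.choose (k:ℕ) : ℂ) * kraw N ((b:ℕ)) ((k:ℕ):ℂ) * (N.choose (b:ℕ) : ℂ)))
        = ((2:ℂ)^N)⁻¹ * (N.choose (b:ℕ) : ℂ) *
            ((N.choose (k:ℕ) : ℂ) * kraw N (a:ℕ) ((k:ℕ):ℂ) * kraw N (b:ℕ) ((k:ℕ):ℂ)) := by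
      intro k
      have hk : (k : ℕ) ≤ N := Nat.lt_succ_iff.mp k.isLt
      rw [kraw_symm N (k:ℕ) (a:ℕ) hk ha]
      ring
    rw [Finset.sum_congr rfl (fun k _ => hterm k), ← Finset.mul_sum]
    rw [Fin.sum_univ_eq_sum_range
      (fun i => (N.choose i : ℂ) * kraw N (a:ℕ) (i:ℂ) * kraw N (b:ℕ) (i:ℂ))]
    rw [ortho_kraw N (a:ℕ) (b:ℕ) ha hb]
    rcases eq_or_ne a b with hab | hab
    · subst hab
      rw [if_pos rfl, Matrix.one_apply_eq]
      field_simp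
    · rw [if_neg (fun h => hab (Fin.ext h)), Matrix.one_apply_ne hab, mul_zero]
  exact ⟨hmain, mul_eq_one_comm.mp hmain, ortho_kraw N⟩
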